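/- Let Ω ⊆ ℝ^M be a nonempty bounded open set with Lebesgue measure, K ⊆ ℝ^N a nonempty closed convex set, and φ : [0,1] × Ω × K → (nonempty subsets of ℝ^N) an upper semicontinuous set-valued map with convex compact values such that there exist α ∈ L²(Ω, ℝ) and c > 0 with |v| ≤ α(x) + c|y| for every t ∈ [0,1], x ∈ Ω, y ∈ K and v ∈ φ(t,x,y). Let 𝓚 := {u ∈ L²(Ω, ℝ^N) : u(x) ∈ K for a.e. x ∈ Ω} and define the Nemytskii operator F(t,u) := {v ∈ L²(Ω, ℝ^N) : v(x) ∈ φ(t, x, u(x)) for a.e. x ∈ Ω}. Then F is Hausdorff upper semicontinuous with respect to both variables: for every t₀ ∈ [0,1], u₀ ∈ 𝓚 and ε > 0 there exists δ > 0 such that whenever t ∈ [0,1], u ∈ 𝓚, |t − t₀| < δ and ‖u − u₀‖_{L²} < δ, every v ∈ F(t,u) satisfies ‖v − v'‖_{L²} < ε for some v' ∈ F(t₀,u₀). -/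

import Mathlib

open MeasureTheory Metric Set

set_option maxHeartbeats 1000000

open Filter
open scoped ENNReal NNReal

variable {M N : ℕ}

/-- Core measurable-selection lemma: given `v ∈ L²`, there is a measurable function `d`
equal a.e. to `x ↦ infDist (v x) (φ t₀ x (u₀ x))`, and an element `v'` of `L²` with values
a.e. in `φ t₀ x (u₀ x)` and `‖v x - v' x‖ ≤ d x` a.e. -/
theorem nemytskii_selection
    (Ω : Set (EuclideanSpace ℝ (Fin M))) (hΩne : Ω.Nonempty) (hΩopen : IsOpen Ω)
    (K : Set (EuclideanSpace ℝ (Fin N))) (hKne : K.Nonempty) (hKcl : IsClosed K)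
    (φ : ℝ → EuclideanSpace ℝ (Fin M) → EuclideanSpace ℝ (Fin N) →
      Set (EuclideanSpace ℝ (Fin N)))
    (hφne : ∀ t ∈ Set.Icc (0:ℝ) 1, ∀ x ∈ Ω, ∀ y ∈ K, (φ t x y).Nonempty)
    (hφconv : ∀ t ∈ Set.Icc (0:ℝ) 1, ∀ x ∈ Ω, ∀ y ∈ K, Convex ℝ (φ t x y))
    (hφcpt : ∀ t ∈ Set.Icc (0:ℝ) 1, ∀ x ∈ Ω, ∀ y ∈ K, IsCompact (φ t x y))
    (hφusc : ∀ t₀ ∈ Set.Icc (0:ℝ) 1, ∀ x₀ ∈ Ω, ∀ y₀ ∈ K,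
      ∀ V : Set (EuclideanSpace ℝ (Fin N)), IsOpen V → φ t₀ x₀ y₀ ⊆ V →
        ∃ δ > (0:ℝ), ∀ t ∈ Set.Icc (0:ℝ) 1, ∀ x ∈ Ω, ∀ y ∈ K,
          |t - t₀| < δ → ‖x - x₀‖ < δ → ‖y - y₀‖ < δ → φ t x y ⊆ V)
    (α : EuclideanSpace ℝ (Fin M) → ℝ)
    (hα : MemLp α 2 (volume.restrict Ω)) (c : ℝ)
    (hgrowth : ∀ t ∈ Set.Icc (0:ℝ) 1, ∀ x ∈ Ω, ∀ y ∈ K, ∀ v ∈ φ t x y,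
      ‖v‖ ≤ α x + c * ‖y‖)
    (t₀ : ℝ) (ht₀ : t₀ ∈ Set.Icc (0:ℝ) 1)
    (u₀ : Lp (EuclideanSpace ℝ (Fin N)) 2 (volume.restrict Ω))
    (hu₀ : ∀ᵐ x ∂(volume.restrict Ω), u₀ x ∈ K)
    (v : Lp (EuclideanSpace ℝ (Fin N)) 2 (volume.restrict Ω)) :
    ∃ d : EuclideanSpace ℝ (Fin M) → ℝ, Measurable d ∧ (∀ x, 0 ≤ d x) ∧
      (∀ᵐ x ∂(volume.restrict Ω), d x = infDist (v x) (φ t₀ x (u₀ x))) ∧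
      ∃ v' : Lp (EuclideanSpace ℝ (Fin N)) 2 (volume.restrict Ω),
        (∀ᵐ x ∂(volume.restrict Ω), v' x ∈ φ t₀ x (u₀ x)) ∧
        (∀ᵐ x ∂(volume.restrict Ω), ‖v x - v' x‖ ≤ d x) := by
  classical
  obtain ⟨x₀, hx₀⟩ := hΩne
  obtain ⟨k₀, hk₀⟩ := hKne
  -- measurable "retractions"
  set p₁ : EuclideanSpace ℝ (Fin M) → EuclideanSpace ℝ (Fin M) :=
    Ω.piecewise id (fun _ => x₀) with hp₁def
  set p₂ : EuclideanSpace ℝ (Fin M) → EuclideanSpace ℝ (Fin N) :=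
    ((⇑u₀) ⁻¹' K).piecewise (⇑u₀) (fun _ => k₀) with hp₂def
  have hu₀m : Measurable (⇑u₀) := (Lp.stronglyMeasurable u₀).measurable
  have hvm : Measurable (⇑v) := (Lp.stronglyMeasurable v).measurable
  have hp₁m : Measurable p₁ := Measurable.piecewise hΩopen.measurableSet measurable_id
    measurable_const
  have hp₂m : Measurable p₂ := Measurable.piecewise (hu₀m hKcl.measurableSet) hu₀m
    measurable_const
  have hp₁Ω : ∀ x, p₁ x ∈ Ω := by
    intro x
    by_cases h : x ∈ Ω <;> simp [hp₁def, Set.piecewise, h, hx₀]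
  have hp₂K : ∀ x, p₂ x ∈ K := by
    intro x
    by_cases h : u₀ x ∈ K <;> simp [hp₂def, Set.piecewise, h, hk₀]
  have hp₁ae : ∀ᵐ x ∂(volume.restrict Ω), p₁ x = x := by
    filter_upwards [ae_restrict_mem hΩopen.measurableSet] with x hx
    simp [hp₁def, Set.piecewise, hx]
  have hp₂ae : ∀ᵐ x ∂(volume.restrict Ω), p₂ x = u₀ x := by
    filter_upwards [hu₀] with x hx
    simp [hp₂def, Set.piecewise, hx]
  set Ψ : EuclideanSpace ℝ (Fin M) → Set (EuclideanSpace ℝ (Fin N)) :=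
    fun x => φ t₀ (p₁ x) (p₂ x) with hΨdef
  have hΨne : ∀ x, (Ψ x).Nonempty := fun x => hφne t₀ ht₀ _ (hp₁Ω x) _ (hp₂K x)
  have hΨcpt : ∀ x, IsCompact (Ψ x) := fun x => hφcpt t₀ ht₀ _ (hp₁Ω x) _ (hp₂K x)
  have hΨconv : ∀ x, Convex ℝ (Ψ x) := fun x => hφconv t₀ ht₀ _ (hp₁Ω x) _ (hp₂K x)
  -- the joint lower semicontinuous distance function on the subtype
  set T := ↥((Ω ×ˢ K : Set (EuclideanSpace ℝ (Fin M) × EuclideanSpace ℝ (Fin N))))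
  set g : EuclideanSpace ℝ (Fin N) × T → ℝ :=
    fun zp => infDist zp.1 (φ t₀ zp.2.val.1 zp.2.val.2) with hgdef
  have hglsc : LowerSemicontinuous g := by
    rintro ⟨z, ⟨⟨a, b⟩, ha, hb⟩⟩ lam hlam
    simp only [hgdef] at hlam ⊢
    set d₀ := infDist z (φ t₀ a b) with hd₀
    set ε := d₀ - lam with hε
    have hεpos : 0 < ε := by simp [hε]; linarith
    obtain ⟨δ, hδpos, hδ⟩ := hφusc t₀ ht₀ a ha b hb
      (thickening (ε/2) (φ t₀ a b)) isOpen_thickening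
      (self_subset_thickening (by linarith) _)
    rw [Metric.eventually_nhds_iff]
    refine ⟨min δ (ε/4), lt_min hδpos (by linarith), ?_⟩
    rintro ⟨z', ⟨⟨a', b'⟩, ha', hb'⟩⟩ hdist
    rw [Prod.dist_eq] at hdist
    have hz : dist z' z < min δ (ε/4) := (le_max_left _ _).trans_lt hdist
    have hpp : dist ((a', b') : EuclideanSpace ℝ (Fin M) × EuclideanSpace ℝ (Fin N)) (a, b)
        < min δ (ε/4) := by
      have := (le_max_right _ _).trans_lt hdist
      rwa [Subtype.dist_eq] at this
    rw [Prod.dist_eq] at hpp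
    have h1 : ‖a' - a‖ < δ := by
      rw [← dist_eq_norm]
      exact ((le_max_left _ _).trans_lt hpp).trans_le (min_le_left _ _)
    have h2 : ‖b' - b‖ < δ := by
      rw [← dist_eq_norm]
      exact ((le_max_right _ _).trans_lt hpp).trans_le (min_le_left _ _)
    have hsub : φ t₀ a' b' ⊆ thickening (ε/2) (φ t₀ a b) :=
      hδ t₀ ht₀ a' ha' b' hb' (by simpa using hδpos) h1 h2
    have key : d₀ - ε/2 ≤ infDist z' (φ t₀ a' b') + dist z z' := by
      by_contra hcon
      push_neg at hcon
      obtain ⟨y, hy, hyd⟩ := (infDist_lt_iff (hφne t₀ ht₀ a' ha' b' hb')).mp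
        (by linarith [dist_nonneg (x := z) (y := z')] :
          infDist z' (φ t₀ a' b') < d₀ - ε/2 - dist z z')
      obtain ⟨q, hq, hqd⟩ := mem_thickening_iff.mp (hsub hy)
      have h4 : dist z q ≤ dist z z' + dist z' y + dist y q := dist_triangle4 z z' y q
      have hzq : d₀ ≤ dist z q := infDist_le_dist_of_mem hq
      linarith
    have hzz' : dist z z' < ε/4 := by
      rw [dist_comm]; exact hz.trans_le (min_le_right _ _)
    linarith
  have hgm : Measurable g := hglsc.measurable
  have hmemT : ∀ x, ((p₁ x, p₂ x) : EuclideanSpace ℝ (Fin M) × EuclideanSpace ℝ (Fin N))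
      ∈ Ω ×ˢ K := fun x => ⟨hp₁Ω x, hp₂K x⟩
  set W : EuclideanSpace ℝ (Fin M) → T := fun x => ⟨(p₁ x, p₂ x), hmemT x⟩ with hWdef
  have hWm : Measurable W := (hp₁m.prodMk hp₂m).subtype_mk
  obtain ⟨z, hz⟩ := TopologicalSpace.exists_dense_seq (EuclideanSpace ℝ (Fin N))
  set f : ℕ → EuclideanSpace ℝ (Fin M) → ℝ := fun j x => g (z j, W x) with hfdef
  have hfm : ∀ j, Measurable (f j) := fun j => hgm.comp (measurable_const.prodMk hWm)
  set dmeas : EuclideanSpace ℝ (Fin M) → ℝ := fun x => g (v x, W x) with hdmdef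
  have hdm : Measurable dmeas := hgm.comp (hvm.prodMk hWm)
  have hfeq : ∀ j x, f j x = infDist (z j) (Ψ x) := fun j x => rfl
  have hdeq : ∀ x, dmeas x = infDist (v x) (Ψ x) := fun x => rfl
  have hdnn : ∀ x, 0 ≤ dmeas x := fun x => by rw [hdeq]; exact infDist_nonneg
  have hmono : ∀ {a b : ℕ}, a ≤ b → 1/((b:ℝ)+1) ≤ 1/((a:ℝ)+1) := by
    intro a b hab
    apply one_div_le_one_div_of_le (by positivity)
    have : (a:ℝ) ≤ (b:ℝ) := Nat.cast_le.mpr hab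
    linarith
  have hhalf : ∀ m : ℕ, 1/(2*((m:ℝ)+1)) < 1/((m:ℝ)+1) := by
    intro m
    have hx : (0:ℝ) < (m:ℝ)+1 := by positivity
    rw [div_lt_div_iff₀ (by positivity) hx]
    nlinarith
  -- the approximating selections
  set Q : ℕ → EuclideanSpace ℝ (Fin M) → ℕ → Prop := fun m x j =>
    f j x < 1/((m:ℝ)+1) ∧ dist (z j) (v x) < dmeas x + 1/((m:ℝ)+1) with hQdef
  have hQex : ∀ m x, ∃ j, Q m x j := by
    intro m x
    have hpos : (0:ℝ) < 1/(2*((m:ℝ)+1)) := by positivity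
    have h1 : infDist (v x) (Ψ x) < dmeas x + 1/(2*((m:ℝ)+1)) := by
      rw [← hdeq]; linarith
    obtain ⟨y, hy, hyd⟩ := (infDist_lt_iff (hΨne x)).mp h1
    obtain ⟨j, hj⟩ := hz.exists_dist_lt y hpos
    have hj' : dist (z j) y < 1/(2*((m:ℝ)+1)) := by rw [dist_comm]; exact hj
    refine ⟨j, ?_, ?_⟩
    · rw [hfeq]
      have h2 := infDist_le_dist_of_mem (x := z j) hy
      linarith [hhalf m]
    · have t1 : dist (z j) (v x) ≤ dist (z j) y + dist y (v x) := dist_triangle _ _ _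
      have t2 : dist y (v x) < dmeas x + 1/(2*((m:ℝ)+1)) := by rw [dist_comm]; exact hyd
      have t3 : 1/(2*((m:ℝ)+1)) + 1/(2*((m:ℝ)+1)) = 1/((m:ℝ)+1) := by
        field_simp
        norm_num
      linarith
  have hQms : ∀ m j, MeasurableSet {x | Q m x j} := by
    intro m j
    refine MeasurableSet.inter ?_ ?_
    · exact measurableSet_lt (hfm j) measurable_const
    · exact measurableSet_lt (measurable_const.dist hvm) (hdm.add_const _)
  set w : ℕ → EuclideanSpace ℝ (Fin M) → EuclideanSpace ℝ (Fin N) :=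
    fun m x => z (Nat.find (hQex m x)) with hwdef
  have hwm : ∀ m, Measurable (w m) := fun m =>
    measurable_from_top.comp (measurable_find _ (hQms m))
  have hw1 : ∀ m x, infDist (w m x) (Ψ x) < 1/((m:ℝ)+1) := by
    intro m x
    have := (Nat.find_spec (hQex m x)).1
    rwa [hfeq] at this
  have hw2 : ∀ m x, dist (w m x) (v x) < dmeas x + 1/((m:ℝ)+1) :=
    fun m x => (Nat.find_spec (hQex m x)).2
  have hy : ∀ m x, ∃ y ∈ Ψ x, dist (w m x) y < 1/((m:ℝ)+1) :=
    fun m x => (infDist_lt_iff (hΨne x)).mp (hw1 m x)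
  -- pointwise Cauchy
  have hCauchy : ∀ x, CauchySeq (fun m => w m x) := by
    intro x
    set d := dmeas x with hd
    have hd0 : 0 ≤ d := hdnn x
    have key : ∀ m k, dist (w m x) (w k x) ≤ (1/((m:ℝ)+1) + 1/((k:ℝ)+1)) +
        Real.sqrt ((8*d+8) * (1/((m:ℝ)+1) + 1/((k:ℝ)+1))) := by
      intro m k
      obtain ⟨ym, hym, hymd⟩ := hy m x
      obtain ⟨yk, hyk, hykd⟩ := hy k x
      have hvm' : dist (v x) ym < d + 2 * (1/((m:ℝ)+1)) := by
        have h2 := hw2 m x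
        rw [dist_comm] at h2
        have t : dist (v x) ym ≤ dist (v x) (w m x) + dist (w m x) ym := dist_triangle _ _ _
        linarith
      have hvk' : dist (v x) yk < d + 2 * (1/((k:ℝ)+1)) := by
        have h2 := hw2 k x
        rw [dist_comm] at h2
        have t : dist (v x) yk ≤ dist (v x) (w k x) + dist (w k x) yk := dist_triangle _ _ _
        linarith
      have hmid : (1/2 : ℝ) • ym + (1/2 : ℝ) • yk ∈ Ψ x :=
        hΨconv x hym hyk (by norm_num) (by norm_num) (by norm_num)
      set a := v x with ha
      set mid := (1/2 : ℝ) • ym + (1/2 : ℝ) • yk with hmiddef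
      have hdmid : d ≤ ‖mid - a‖ := by
        have h5 := infDist_le_dist_of_mem (x := a) hmid
        rw [← hdeq] at h5
        rw [dist_eq_norm, norm_sub_rev a mid] at h5
        exact h5
      have law := parallelogram_law_with_norm ℝ (ym - a) (yk - a)
      have hsum : (ym - a) + (yk - a) = (2:ℝ) • (mid - a) := by
        simp only [hmiddef]; module
      have hdiff : (ym - a) - (yk - a) = ym - yk := by abel
      rw [hsum, hdiff, norm_smul] at law
      have hn2 : ‖(2:ℝ)‖ = 2 := by norm_num
      rw [hn2] at law
      have h2a : ‖ym - a‖ = dist a ym := by rw [dist_eq_norm, norm_sub_rev]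
      have h2b : ‖yk - a‖ = dist a yk := by rw [dist_eq_norm, norm_sub_rev]
      rw [h2a, h2b] at law
      have e5 : 1/((m:ℝ)+1) ≤ 1 := by
        rw [div_le_one (by positivity)]
        linarith [Nat.cast_nonneg (α := ℝ) m]
      have e6 : 1/((k:ℝ)+1) ≤ 1 := by
        rw [div_le_one (by positivity)]
        linarith [Nat.cast_nonneg (α := ℝ) k]
      have e7 : (0:ℝ) < 1/((m:ℝ)+1) := by positivity
      have e8 : (0:ℝ) < 1/((k:ℝ)+1) := by positivity
      have hsq : ‖ym - yk‖ * ‖ym - yk‖ ≤ (8*d+8) * (1/((m:ℝ)+1) + 1/((k:ℝ)+1)) := by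
        nlinarith [law, hdmid, dist_nonneg (x := a) (y := ym), dist_nonneg (x := a) (y := yk),
          norm_nonneg (ym - yk), norm_nonneg (mid - a)]
      have hyy : dist ym yk ≤ Real.sqrt ((8*d+8) * (1/((m:ℝ)+1) + 1/((k:ℝ)+1))) := by
        rw [dist_eq_norm]
        rw [show ‖ym - yk‖ * ‖ym - yk‖ = ‖ym - yk‖^2 by ring] at hsq
        have hnn : (0:ℝ) ≤ (8*d+8) * (1/((m:ℝ)+1) + 1/((k:ℝ)+1)) := by positivity
        exact (Real.le_sqrt (norm_nonneg _) hnn).mpr hsq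
      have hykd' : dist yk (w k x) < 1/((k:ℝ)+1) := by rw [dist_comm]; exact hykd
      calc dist (w m x) (w k x) ≤ dist (w m x) ym + dist ym yk + dist yk (w k x) :=
            dist_triangle4 _ _ _ _
        _ ≤ (1/((m:ℝ)+1) + 1/((k:ℝ)+1)) +
            Real.sqrt ((8*d+8) * (1/((m:ℝ)+1) + 1/((k:ℝ)+1))) := by linarith
    -- now conclude Cauchy
    apply cauchySeq_of_le_tendsto_0
      (b := fun ND : ℕ => 2*(1/((ND:ℝ)+1)) + Real.sqrt ((8*d+8) * (2*(1/((ND:ℝ)+1)))))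
    · intro n m L hLn hLm
      have h1 := hmono hLn
      have h2 := hmono hLm
      have harg : (8*d+8) * (1/((n:ℝ)+1) + 1/((m:ℝ)+1)) ≤ (8*d+8) * (2*(1/((L:ℝ)+1))) := by
        apply mul_le_mul_of_nonneg_left (by linarith) (by linarith)
      have := (key n m).trans (by
        have := Real.sqrt_le_sqrt harg
        linarith : (1/((n:ℝ)+1) + 1/((m:ℝ)+1)) +
          Real.sqrt ((8*d+8) * (1/((n:ℝ)+1) + 1/((m:ℝ)+1))) ≤
          2*(1/((L:ℝ)+1)) + Real.sqrt ((8*d+8) * (2*(1/((L:ℝ)+1)))))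
      exact this
    · have hqlim : Tendsto (fun n : ℕ => 1/((n:ℝ)+1)) atTop (nhds 0) :=
        tendsto_one_div_add_atTop_nhds_zero_nat
      have l1 : Tendsto (fun n : ℕ => 2*(1/((n:ℝ)+1))) atTop (nhds 0) := by
        simpa using hqlim.const_mul 2
      have l2 : Tendsto (fun n : ℕ => (8*d+8) * (2*(1/((n:ℝ)+1)))) atTop (nhds 0) := by
        simpa using l1.const_mul (8*d+8)
      have l3 : Tendsto (fun n : ℕ => Real.sqrt ((8*d+8) * (2*(1/((n:ℝ)+1))))) atTop
          (nhds 0) := by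
        have := (Real.continuous_sqrt.tendsto 0).comp l2
        simpa [Function.comp_def] using this
      simpa using l1.add l3
  -- pointwise limits give the selection
  have hlim : ∀ x, ∃ L, Tendsto (fun m => w m x) atTop (nhds L) :=
    fun x => cauchySeq_tendsto_of_complete (hCauchy x)
  set vraw : EuclideanSpace ℝ (Fin M) → EuclideanSpace ℝ (Fin N) :=
    fun x => (hlim x).choose with hvrawdef
  have htend : ∀ x, Tendsto (fun m => w m x) atTop (nhds (vraw x)) :=
    fun x => (hlim x).choose_spec
  have hvrawm : Measurable vraw :=
    measurable_of_tendsto_metrizable hwm (tendsto_pi_nhds.mpr htend)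
  have hqlim : Tendsto (fun n : ℕ => 1/((n:ℝ)+1)) atTop (nhds 0) :=
    tendsto_one_div_add_atTop_nhds_zero_nat
  have hmem : ∀ x, vraw x ∈ Ψ x := by
    intro x
    have h1 : Tendsto (fun m => infDist (w m x) (Ψ x)) atTop
        (nhds (infDist (vraw x) (Ψ x))) :=
      ((continuous_infDist_pt (Ψ x)).tendsto _).comp (htend x)
    have h2 : infDist (vraw x) (Ψ x) ≤ 0 :=
      le_of_tendsto_of_tendsto' h1 hqlim (fun m => (hw1 m x).le)
    have h3 : infDist (vraw x) (Ψ x) = 0 := le_antisymm h2 infDist_nonneg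
    exact ((hΨcpt x).isClosed.mem_iff_infDist_zero (hΨne x)).mpr h3
  have hdist : ∀ x, dist (v x) (vraw x) ≤ dmeas x := by
    intro x
    have h1 : Tendsto (fun m => dist (v x) (w m x)) atTop
        (nhds (dist (v x) (vraw x))) := tendsto_const_nhds.dist (htend x)
    have h2 : Tendsto (fun m : ℕ => dmeas x + 1/((m:ℝ)+1)) atTop (nhds (dmeas x)) := by
      simpa using (tendsto_const_nhds (x := dmeas x) (f := atTop (α := ℕ))).add hqlim
    exact le_of_tendsto_of_tendsto' h1 h2 (fun m => by
      have := hw2 m x; rw [dist_comm] at this; exact this.le)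
  -- vraw is in L²
  have hBmem : MemLp (fun x => α (p₁ x) + c * ‖p₂ x‖) 2 (volume.restrict Ω) := by
    have h1 : MemLp (fun x => α (p₁ x)) 2 (volume.restrict Ω) := by
      apply MemLp.ae_eq ?_ hα
      filter_upwards [hp₁ae] with x hx
      rw [hx]
    have h2 : MemLp (fun x => c * ‖p₂ x‖) 2 (volume.restrict Ω) := by
      have h3 : MemLp (fun x => ‖p₂ x‖) 2 (volume.restrict Ω) := by
        apply MemLp.ae_eq ?_ (Lp.memLp u₀).norm
        filter_upwards [hp₂ae] with x hx
        rw [hx]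
      exact h3.const_mul c
    exact h1.add h2
  have hvrawmem : MemLp vraw 2 (volume.restrict Ω) := by
    apply MemLp.of_le hBmem hvrawm.stronglyMeasurable.aestronglyMeasurable
    apply Filter.Eventually.of_forall
    intro x
    have := hgrowth t₀ ht₀ _ (hp₁Ω x) _ (hp₂K x) _ (hmem x)
    exact this.trans (le_abs_self _)
  refine ⟨dmeas, hdm, hdnn, ?_, hvrawmem.toLp vraw, ?_, ?_⟩
  · filter_upwards [hp₁ae, hp₂ae] with x h1 h2
    rw [hdeq x]
    simp only [hΨdef]
    rw [h1, h2]
  · filter_upwards [hvrawmem.coeFn_toLp, hp₁ae, hp₂ae] with x hx h1 h2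
    rw [hx]
    have := hmem x
    simp only [hΨdef] at this
    rwa [h1, h2] at this
  · filter_upwards [hvrawmem.coeFn_toLp] with x hx
    rw [hx, ← dist_eq_norm]
    exact hdist x

open scoped ENNReal NNReal


/-- Let `Ω ⊆ ℝ^M` be nonempty bounded open, `K ⊆ ℝ^N` nonempty closed
convex, and `φ` usc with convex compact values satisfying `|v| ≤ α(x) + c|y|` with
`α ∈ L²(Ω)`.  Then the Nemytskii operator
`F(t,u) = {v ∈ L²(Ω,ℝ^N) : v(x) ∈ φ(t,x,u(x)) a.e.}` is Hausdorff upper semicontinuous in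
both variables on `[0,1] × 𝓚`, where `𝓚 = {u ∈ L²(Ω,ℝ^N) : u(x) ∈ K a.e.}`. -/
theorem nemytskii_operator_husc
    {M N : ℕ}
    (Ω : Set (EuclideanSpace ℝ (Fin M))) (hΩne : Ω.Nonempty)
    (hΩbdd : Bornology.IsBounded Ω) (hΩopen : IsOpen Ω)
    (K : Set (EuclideanSpace ℝ (Fin N))) (hKne : K.Nonempty)
    (hKcl : IsClosed K) (hKconv : Convex ℝ K)
    (φ : ℝ → EuclideanSpace ℝ (Fin M) → EuclideanSpace ℝ (Fin N) →
      Set (EuclideanSpace ℝ (Fin N)))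
    (hφne : ∀ t ∈ Set.Icc (0:ℝ) 1, ∀ x ∈ Ω, ∀ y ∈ K, (φ t x y).Nonempty)
    (hφconv : ∀ t ∈ Set.Icc (0:ℝ) 1, ∀ x ∈ Ω, ∀ y ∈ K, Convex ℝ (φ t x y))
    (hφcpt : ∀ t ∈ Set.Icc (0:ℝ) 1, ∀ x ∈ Ω, ∀ y ∈ K, IsCompact (φ t x y))
    (hφusc : ∀ t₀ ∈ Set.Icc (0:ℝ) 1, ∀ x₀ ∈ Ω, ∀ y₀ ∈ K,
      ∀ V : Set (EuclideanSpace ℝ (Fin N)), IsOpen V → φ t₀ x₀ y₀ ⊆ V →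
        ∃ δ > (0:ℝ), ∀ t ∈ Set.Icc (0:ℝ) 1, ∀ x ∈ Ω, ∀ y ∈ K,
          |t - t₀| < δ → ‖x - x₀‖ < δ → ‖y - y₀‖ < δ → φ t x y ⊆ V)
    (α : EuclideanSpace ℝ (Fin M) → ℝ)
    (hα : MemLp α 2 (volume.restrict Ω)) (c : ℝ) (hc : 0 < c)
    (hgrowth : ∀ t ∈ Set.Icc (0:ℝ) 1, ∀ x ∈ Ω, ∀ y ∈ K, ∀ v ∈ φ t x y,
      ‖v‖ ≤ α x + c * ‖y‖)
    -- the constraint set in L² and the Nemytskii operator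
    (𝓚 : Set (Lp (EuclideanSpace ℝ (Fin N)) 2 (volume.restrict Ω)))
    (h𝓚 : 𝓚 = {u : Lp (EuclideanSpace ℝ (Fin N)) 2 (volume.restrict Ω) |
      ∀ᵐ x ∂(volume.restrict Ω), u x ∈ K})
    (F : ℝ → Lp (EuclideanSpace ℝ (Fin N)) 2 (volume.restrict Ω) →
      Set (Lp (EuclideanSpace ℝ (Fin N)) 2 (volume.restrict Ω)))
    (hF : ∀ t u, F t u = {v : Lp (EuclideanSpace ℝ (Fin N)) 2 (volume.restrict Ω) |
      ∀ᵐ x ∂(volume.restrict Ω), v x ∈ φ t x (u x)}) :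
    ∀ t₀ ∈ Set.Icc (0:ℝ) 1, ∀ u₀ ∈ 𝓚, ∀ ε > (0:ℝ), ∃ δ > (0:ℝ),
      ∀ t ∈ Set.Icc (0:ℝ) 1, ∀ u ∈ 𝓚, |t - t₀| < δ → ‖u - u₀‖ < δ →
        ∀ v ∈ F t u, ∃ v' ∈ F t₀ u₀, ‖v - v'‖ < ε := by
  classical
  intro t₀ ht₀ u₀ hu₀ ε hε
  by_contra hcon
  push_neg at hcon
  have hcon' : ∀ n : ℕ, ∃ t ∈ Set.Icc (0:ℝ) 1,
      ∃ u ∈ 𝓚, |t - t₀| < (1/2)^n ∧ ‖u - u₀‖ < (1/2)^n ∧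
      ∃ v ∈ F t u, ∀ v' ∈ F t₀ u₀, ε ≤ ‖v - v'‖ := by
    intro n
    exact hcon ((1/2)^n) (by positivity)
  choose t ht u hu hts hus v hv hfar using hcon'
  rw [h𝓚] at hu₀
  have huK : ∀ n, ∀ᵐ x ∂(volume.restrict Ω), (u n) x ∈ K := by
    intro n; have := hu n; rw [h𝓚] at this; exact this
  have hvmem : ∀ n, ∀ᵐ x ∂(volume.restrict Ω), (v n) x ∈ φ (t n) x ((u n) x) := by
    intro n; have := hv n; rw [hF] at this; exact this
  -- apply the selection lemma to each vₙ
  have hsel := fun n => nemytskii_selection Ω hΩne hΩopen K hKne hKcl φ hφne hφconv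
    hφcpt hφusc α hα c hgrowth t₀ ht₀ u₀ hu₀ (v n)
  choose d hdm hdnn hdeq v' hv'mem hv'close using hsel
  have hv'F : ∀ n, v' n ∈ F t₀ u₀ := by
    intro n; rw [hF]; exact hv'mem n
  have hεle : ∀ n, ε ≤ ‖v n - v' n‖ := fun n => hfar n (v' n) (hv'F n)
  -- ℝ≥0∞-valued difference functions
  set gk : ℕ → EuclideanSpace ℝ (Fin M) → ℝ≥0∞ :=
    fun n x => (‖(u n) x - u₀ x‖₊ : ℝ≥0∞) with hgkdef
  have hgkm : ∀ n, Measurable (gk n) := fun n =>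
    (((Lp.stronglyMeasurable (u n)).measurable.sub
      (Lp.stronglyMeasurable u₀).measurable).nnnorm).coe_nnreal_ennreal
  set G : EuclideanSpace ℝ (Fin M) → ℝ≥0∞ := fun x => ∑' n, gk n x with hGdef
  have hGm : Measurable G := Measurable.ennreal_tsum hgkm
  -- each gk n has L² (lintegral) norm at most (1/2)^n
  have hgknorm : ∀ n, (∫⁻ x, (gk n x)^(2:ℝ) ∂(volume.restrict Ω))^(1/(2:ℝ)) ≤
      ENNReal.ofReal ((1/2)^n) := by
    intro n
    have h1 : (∫⁻ x, (gk n x)^(2:ℝ) ∂(volume.restrict Ω))^(1/(2:ℝ)) =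
        eLpNorm (fun x => (u n) x - u₀ x) 2 (volume.restrict Ω) := by
      rw [eLpNorm_eq_lintegral_rpow_enorm_toReal two_ne_zero ENNReal.ofNat_ne_top]
      norm_num
      simp only [hgkdef, enorm_eq_nnnorm]
    rw [h1]
    have h2 : eLpNorm (fun x => (u n) x - u₀ x) 2 (volume.restrict Ω) =
        eLpNorm (⇑(u n - u₀)) 2 (volume.restrict Ω) :=
      (eLpNorm_congr_ae (Lp.coeFn_sub (u n) u₀)).symm
    rw [h2]
    have h3 : eLpNorm (⇑(u n - u₀)) 2 (volume.restrict Ω) ≠ ∞ := Lp.eLpNorm_ne_top _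
    refine le_of_lt ((ENNReal.lt_ofReal_iff_toReal_lt h3).mpr ?_)
    rw [← Lp.norm_def]
    exact hus n
  -- Minkowski for partial sums
  set S : ℕ → EuclideanSpace ℝ (Fin M) → ℝ≥0∞ :=
    fun m x => ∑ i ∈ Finset.range m, gk i x with hSdef
  have hSm : ∀ m, Measurable (S m) := fun m =>
    Finset.measurable_sum _ (fun i _ => hgkm i)
  have hmink : ∀ m, (∫⁻ x, (S m x)^(2:ℝ) ∂(volume.restrict Ω))^(1/(2:ℝ)) ≤
      ∑ i ∈ Finset.range m, (∫⁻ x, (gk i x)^(2:ℝ) ∂(volume.restrict Ω))^(1/(2:ℝ)) := by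
    intro m
    induction m with
    | zero =>
      simp only [hSdef, Finset.range_zero, Finset.sum_empty]
      rw [show (∫⁻ x, ((0:ℝ≥0∞))^(2:ℝ) ∂(volume.restrict Ω)) = 0 by
        simp [ENNReal.rpow_two]]
      simp
    | succ m ih =>
      have hstep : ∀ x, S (m+1) x = S m x + gk m x := by
        intro x; simp only [hSdef]; rw [Finset.sum_range_succ]
      have h1 : (∫⁻ x, (S (m+1) x)^(2:ℝ) ∂(volume.restrict Ω))^(1/(2:ℝ)) ≤
          (∫⁻ x, (S m x)^(2:ℝ) ∂(volume.restrict Ω))^(1/(2:ℝ)) +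
          (∫⁻ x, (gk m x)^(2:ℝ) ∂(volume.restrict Ω))^(1/(2:ℝ)) := by
        have := ENNReal.lintegral_Lp_add_le (μ := volume.restrict Ω)
          (f := S m) (g := gk m) (hSm m).aemeasurable (hgkm m).aemeasurable
          (by norm_num : (1:ℝ) ≤ 2)
        calc (∫⁻ x, (S (m+1) x)^(2:ℝ) ∂(volume.restrict Ω))^(1/(2:ℝ))
            = (∫⁻ x, ((S m + gk m) x)^(2:ℝ) ∂(volume.restrict Ω))^(1/(2:ℝ)) := by
              congr 1
              apply lintegral_congr
              intro x
              rw [hstep x]; rfl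
          _ ≤ _ := this
      rw [Finset.sum_range_succ]
      exact h1.trans (add_le_add_left ih _)
  have hSbound : ∀ m, (∫⁻ x, (S m x)^(2:ℝ) ∂(volume.restrict Ω)) ≤
      (ENNReal.ofReal 2)^(2:ℝ) := by
    intro m
    have hsumle :
        ∑ i ∈ Finset.range m, (∫⁻ x, (gk i x)^(2:ℝ) ∂(volume.restrict Ω))^(1/(2:ℝ)) ≤
        ENNReal.ofReal 2 := by
      calc ∑ i ∈ Finset.range m, (∫⁻ x, (gk i x)^(2:ℝ) ∂(volume.restrict Ω))^(1/(2:ℝ))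
          ≤ ∑ i ∈ Finset.range m, ENNReal.ofReal ((1/2)^i) :=
            Finset.sum_le_sum (fun i _ => hgknorm i)
        _ = ENNReal.ofReal (∑ i ∈ Finset.range m, (1/2)^i) :=
            (ENNReal.ofReal_sum_of_nonneg (fun i _ => by positivity)).symm
        _ ≤ ENNReal.ofReal 2 := ENNReal.ofReal_le_ofReal (sum_geometric_two_le m)
    have h1 := (hmink m).trans hsumle
    have h2 := ENNReal.rpow_le_rpow h1 (by norm_num : (0:ℝ) ≤ 2)
    rw [← ENNReal.rpow_mul] at h2
    rw [show (1/2)*(2:ℝ) = 1 by norm_num, ENNReal.rpow_one] at h2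
    exact h2
  -- ∫⁻ G² is finite
  have hGsq : ∫⁻ x, (G x)^(2:ℝ) ∂(volume.restrict Ω) ≤ (ENNReal.ofReal 2)^(2:ℝ) := by
    have hpt : ∀ x, (G x)^(2:ℝ) = ⨆ m, (S m x)^(2:ℝ) := by
      intro x
      have hmono : Monotone (fun m => S m x) := by
        intro a b hab
        simp only [hSdef]
        exact Finset.sum_le_sum_of_subset (Finset.range_subset_range.mpr hab)
      have htendsto : Tendsto (fun m => S m x) atTop (nhds (G x)) :=
        ENNReal.tendsto_nat_tsum _
      have htendsq : Tendsto (fun m => (S m x)^(2:ℝ)) atTop (nhds ((G x)^(2:ℝ))) :=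
        ((ENNReal.continuous_rpow_const).tendsto _).comp htendsto
      have hmonosq : Monotone (fun m => (S m x)^(2:ℝ)) := fun a b hab =>
        ENNReal.rpow_le_rpow (hmono hab) (by norm_num)
      exact tendsto_nhds_unique htendsq (tendsto_atTop_iSup hmonosq)
    calc ∫⁻ x, (G x)^(2:ℝ) ∂(volume.restrict Ω)
        = ∫⁻ x, ⨆ m, (S m x)^(2:ℝ) ∂(volume.restrict Ω) := lintegral_congr hpt
      _ = ⨆ m, ∫⁻ x, (S m x)^(2:ℝ) ∂(volume.restrict Ω) := by
          apply lintegral_iSup' (fun m => ((hSm m).pow_const _).aemeasurable)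
          apply Filter.Eventually.of_forall
          intro x a b hab
          exact ENNReal.rpow_le_rpow
            (Finset.sum_le_sum_of_subset (Finset.range_subset_range.mpr hab)) (by norm_num)
      _ ≤ (ENNReal.ofReal 2)^(2:ℝ) := iSup_le hSbound
  have hGfin : ∀ᵐ x ∂(volume.restrict Ω), G x ≠ ∞ := by
    have h1 : ∀ᵐ x ∂(volume.restrict Ω), (G x)^(2:ℝ) < ∞ :=
      ae_lt_top (hGm.pow_const _) (hGsq.trans_lt (by
        rw [show ((ENNReal.ofReal 2):ℝ≥0∞)^(2:ℝ) = ENNReal.ofReal (2^(2:ℝ)) from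
          ENNReal.ofReal_rpow_of_nonneg (by norm_num) (by norm_num)]
        exact ENNReal.ofReal_lt_top)).ne
    filter_upwards [h1] with x hx
    intro hGx
    rw [hGx] at hx
    rw [ENNReal.top_rpow_of_pos (by norm_num)] at hx
    exact absurd hx (lt_irrefl _)
  -- a.e. convergence of uₙ to u₀
  have huconv : ∀ᵐ x ∂(volume.restrict Ω),
      Tendsto (fun n => (u n) x) atTop (nhds (u₀ x)) := by
    filter_upwards [hGfin] with x hx
    have h1 : Tendsto (fun n => gk n x) atTop (nhds 0) :=
      ENNReal.tendsto_atTop_zero_of_tsum_ne_top hx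
    rw [tendsto_iff_norm_sub_tendsto_zero]
    have h2 : Tendsto (fun n => ((gk n x).toReal : ℝ)) atTop (nhds 0) := by
      have := (ENNReal.tendsto_toReal (by norm_num : (0:ℝ≥0∞) ≠ ∞)).comp h1
      simpa [Function.comp_def] using this
    convert h2 using 2 with n
    simp [hgkdef]

  -- a.e. facts bundled
  have hxΩae : ∀ᵐ x ∂(volume.restrict Ω), x ∈ Ω := ae_restrict_mem hΩopen.measurableSet
  have huKall : ∀ᵐ x ∂(volume.restrict Ω), ∀ n, (u n) x ∈ K := ae_all_iff.mpr huK
  have hvmemall : ∀ᵐ x ∂(volume.restrict Ω), ∀ n, (v n) x ∈ φ (t n) x ((u n) x) :=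
    ae_all_iff.mpr hvmem
  have hdeqall : ∀ᵐ x ∂(volume.restrict Ω),
      ∀ n, d n x = infDist ((v n) x) (φ t₀ x (u₀ x)) := ae_all_iff.mpr hdeq
  -- pointwise convergence of the distances
  have hDlim : ∀ᵐ x ∂(volume.restrict Ω),
      Tendsto (fun n => d n x) atTop (nhds 0) := by
    filter_upwards [hxΩae, hu₀, huKall, hvmemall, hdeqall, huconv] with x hxΩ hxu₀
      hxuK hxv hxd hxconv
    rw [NormedAddCommGroup.tendsto_nhds_zero]
    intro ε' hε'
    obtain ⟨δ, hδpos, hδ⟩ := hφusc t₀ ht₀ x hxΩ (u₀ x) hxu₀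
      (thickening (ε'/2) (φ t₀ x (u₀ x))) isOpen_thickening
      (self_subset_thickening (by linarith) _)
    have h2 : ∀ᶠ n : ℕ in atTop, (1/2:ℝ)^n < δ :=
      (tendsto_pow_atTop_nhds_zero_of_lt_one (by norm_num) (by norm_num)).eventually_lt_const
        hδpos
    have h3 : ∀ᶠ n : ℕ in atTop, dist ((u n) x) (u₀ x) < δ :=
      Metric.tendsto_nhds.mp hxconv δ hδpos
    filter_upwards [h2, h3] with n hn2 hn3
    have hsub : φ (t n) x ((u n) x) ⊆ thickening (ε'/2) (φ t₀ x (u₀ x)) := by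
      apply hδ (t n) (ht n) x hxΩ ((u n) x) (hxuK n) ((hts n).trans hn2)
      · simp [hδpos]
      · rw [← dist_eq_norm]; exact hn3
    obtain ⟨q, hq, hqd⟩ := mem_thickening_iff.mp (hsub (hxv n))
    have h4 : d n x < ε' := by
      rw [hxd n]
      calc infDist ((v n) x) (φ t₀ x (u₀ x)) ≤ dist ((v n) x) q :=
            infDist_le_dist_of_mem hq
        _ < ε' := by linarith
    rw [Real.norm_of_nonneg (hdnn n x)]
    exact h4
  -- the dominating function
  set gre : EuclideanSpace ℝ (Fin M) → ℝ := fun x => (G x).toReal with hgredef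
  have hgrem : Measurable gre := hGm.ennreal_toReal
  have lint_fin : ∀ f : EuclideanSpace ℝ (Fin M) → ℝ, MemLp f 2 (volume.restrict Ω) →
      ∫⁻ x, ((‖f x‖₊ : ℝ≥0∞))^(2:ℝ) ∂(volume.restrict Ω) ≠ ∞ := by
    intro f hf
    have h := hf.2
    rw [eLpNorm_eq_lintegral_rpow_enorm_toReal two_ne_zero ENNReal.ofNat_ne_top] at h
    simp only [ENNReal.toReal_ofNat] at h
    intro hcontra
    simp only [enorm_eq_nnnorm] at h
    rw [hcontra, ENNReal.top_rpow_of_pos (by norm_num)] at h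
    exact absurd h (lt_irrefl _)
  have hgre_mem : MemLp gre 2 (volume.restrict Ω) := by
    refine ⟨hgrem.stronglyMeasurable.aestronglyMeasurable, ?_⟩
    rw [eLpNorm_eq_lintegral_rpow_enorm_toReal two_ne_zero ENNReal.ofNat_ne_top]
    simp only [ENNReal.toReal_ofNat]
    have hpt : ∀ x, ((‖gre x‖₊ : ℝ≥0∞))^(2:ℝ) ≤ (G x)^(2:ℝ) := by
      intro x
      apply ENNReal.rpow_le_rpow ?_ (by norm_num)
      rw [← enorm_eq_nnnorm, ← ofReal_norm, Real.norm_of_nonneg ENNReal.toReal_nonneg]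
      exact ENNReal.ofReal_toReal_le
    calc (∫⁻ x, ((‖gre x‖₊ : ℝ≥0∞))^(2:ℝ) ∂(volume.restrict Ω))^(1/(2:ℝ))
        ≤ (∫⁻ x, (G x)^(2:ℝ) ∂(volume.restrict Ω))^(1/(2:ℝ)) :=
          ENNReal.rpow_le_rpow (lintegral_mono hpt) (by norm_num)
      _ ≤ ((ENNReal.ofReal 2)^(2:ℝ))^(1/(2:ℝ)) := ENNReal.rpow_le_rpow hGsq (by norm_num)
      _ < ∞ := by
          rw [← ENNReal.rpow_mul]
          norm_num
  set Breal : EuclideanSpace ℝ (Fin M) → ℝ :=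
    fun x => 2*‖α x‖ + (2*c)*‖u₀ x‖ + c * gre x with hBdef
  have hBmem : MemLp Breal 2 (volume.restrict Ω) :=
    ((hα.norm.const_mul 2).add ((Lp.memLp u₀).norm.const_mul (2*c))).add
      (hgre_mem.const_mul c)
  -- domination
  have hdomin : ∀ n, ∀ᵐ x ∂(volume.restrict Ω),
      (ENNReal.ofReal (d n x))^(2:ℝ) ≤ ((‖Breal x‖₊ : ℝ≥0∞))^(2:ℝ) := by
    intro n
    filter_upwards [hxΩae, hu₀, huKall, hvmemall, hdeqall, hGfin] with x hxΩ hxu₀ hxuK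
      hxv hxd hGx
    have hq₀ := (hφne t₀ ht₀ x hxΩ (u₀ x) hxu₀).some_mem
    set q₀ := (hφne t₀ ht₀ x hxΩ (u₀ x) hxu₀).some
    have hb1 : ‖(v n) x‖ ≤ α x + c * ‖(u n) x‖ :=
      hgrowth (t n) (ht n) x hxΩ ((u n) x) (hxuK n) _ (hxv n)
    have hb2 : ‖q₀‖ ≤ α x + c * ‖u₀ x‖ := hgrowth t₀ ht₀ x hxΩ (u₀ x) hxu₀ _ hq₀
    have hb3 : ‖(u n) x - u₀ x‖ ≤ gre x := by
      have h5 : (gk n x) ≤ G x := ENNReal.le_tsum n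
      have h6 := ENNReal.toReal_mono hGx h5
      simpa [hgkdef] using h6
    have hb4 : ‖(u n) x‖ ≤ ‖u₀ x‖ + ‖(u n) x - u₀ x‖ := by
      have := norm_sub_norm_le ((u n) x) (u₀ x)
      linarith
    have hb5 : d n x ≤ Breal x := by
      rw [hxd n]
      have h7 : infDist ((v n) x) (φ t₀ x (u₀ x)) ≤ dist ((v n) x) q₀ :=
        infDist_le_dist_of_mem hq₀
      have h8 : dist ((v n) x) q₀ ≤ ‖(v n) x‖ + ‖q₀‖ := by
        rw [dist_eq_norm]; exact norm_sub_le _ _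
      have h9 : α x ≤ ‖α x‖ := le_abs_self _
      have h10 : c * ‖(u n) x‖ ≤ c * (‖u₀ x‖ + gre x) := by
        apply mul_le_mul_of_nonneg_left ?_ hc.le
        linarith
      simp only [hBdef]
      nlinarith [hc.le]
    apply ENNReal.rpow_le_rpow ?_ (by norm_num)
    rw [← enorm_eq_nnnorm, ← ofReal_norm]
    apply ENNReal.ofReal_le_ofReal
    have hBnn : 0 ≤ Breal x := (hdnn n x).trans hb5
    rw [Real.norm_of_nonneg hBnn]
    exact hb5
  -- dominated convergence
  have hDCT : Tendsto (fun n => ∫⁻ x, (ENNReal.ofReal (d n x))^(2:ℝ) ∂(volume.restrict Ω))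
      atTop (nhds 0) := by
    have hlim0 : ∀ᵐ x ∂(volume.restrict Ω),
        Tendsto (fun n => (ENNReal.ofReal (d n x))^(2:ℝ)) atTop (nhds 0) := by
      filter_upwards [hDlim] with x hx
      have hcont : Continuous (fun r : ℝ => (ENNReal.ofReal r)^(2:ℝ)) :=
        (ENNReal.continuous_rpow_const).comp ENNReal.continuous_ofReal
      have := (hcont.tendsto 0).comp hx
      simpa [Function.comp_def, ENNReal.zero_rpow_of_pos] using this
    have := tendsto_lintegral_of_dominated_convergence
      (F := fun n x => (ENNReal.ofReal (d n x))^(2:ℝ)) (f := fun _ => 0)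
      (fun x => ((‖Breal x‖₊ : ℝ≥0∞))^(2:ℝ))
      (fun n => (ENNReal.measurable_ofReal.comp (hdm n)).pow_const _)
      hdomin (lint_fin Breal hBmem) hlim0
    simpa using this
  -- extract a single n and derive the contradiction
  have hev : ∀ᶠ n in atTop,
      ∫⁻ x, (ENNReal.ofReal (d n x))^(2:ℝ) ∂(volume.restrict Ω) <
      ENNReal.ofReal (ε^2) :=
    hDCT.eventually_lt_const (by
      exact ENNReal.ofReal_pos.mpr (by positivity))
  obtain ⟨n, hn⟩ := hev.exists
  have heq : eLpNorm (d n) 2 (volume.restrict Ω) =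
      (∫⁻ x, (ENNReal.ofReal (d n x))^(2:ℝ) ∂(volume.restrict Ω))^(1/(2:ℝ)) := by
    rw [eLpNorm_eq_lintegral_rpow_enorm_toReal two_ne_zero ENNReal.ofNat_ne_top]
    simp only [ENNReal.toReal_ofNat]
    congr 1
    apply lintegral_congr
    intro x
    rw [← ofReal_norm, Real.norm_of_nonneg (hdnn n x)]
  have hrp : ((ENNReal.ofReal (ε^2)))^(1/(2:ℝ)) = ENNReal.ofReal ε := by
    rw [ENNReal.ofReal_rpow_of_nonneg (by positivity) (by norm_num)]
    congr 1
    rw [← Real.rpow_natCast ε 2, ← Real.rpow_mul hε.le]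
    norm_num
  have hlt2 : eLpNorm (d n) 2 (volume.restrict Ω) < ENNReal.ofReal ε := by
    rw [heq, ← hrp]
    exact ENNReal.rpow_lt_rpow hn (by norm_num)
  have hle1 : eLpNorm (⇑(v n - v' n)) 2 (volume.restrict Ω) ≤
      eLpNorm (d n) 2 (volume.restrict Ω) := by
    rw [eLpNorm_congr_ae (Lp.coeFn_sub (v n) (v' n))]
    apply eLpNorm_mono_ae
    filter_upwards [hv'close n] with x hx
    exact hx.trans (le_abs_self _)
  have hlt3 : eLpNorm (⇑(v n - v' n)) 2 (volume.restrict Ω) < ENNReal.ofReal ε :=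
    lt_of_le_of_lt hle1 hlt2
  have hfinal : ‖v n - v' n‖ < ε := by
    rw [Lp.norm_def]
    exact (ENNReal.lt_ofReal_iff_toReal_lt (Lp.eLpNorm_ne_top _)).mp hlt3
  exact absurd (hεle n) (not_le.mpr hfinal)
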